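/- arXiv:1605.06855 — 5 statements merged into one kernel-verified Lean document; each statement's English description precedes it below -/
import Mathlib

section
/- Let λ, μ : ℝ → ℝ be continuous nonnegative functions and let k ≥ 2 be an integer. Then f_k(·; λ, μ) satisfies f_k(0; λ, μ) = 0 and is differentiable in t with f_k'(t; λ, μ) = -(μ(t) + λ(t)) · f_k(t; λ, μ) + μ(t) · f_{k-1}(t; λ, μ) + λ(t) for all t ≥ 0. -/
open MeasureTheory Real Set Filter Topology intervalIntegral

/-- The upper incomplete Gamma function `Γ(k, x) = ∫_x^∞ s^{k-1} e^{-s} ds`. -/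
noncomputable def uGamma (k : ℕ) (x : ℝ) : ℝ :=
  ∫ s in Set.Ioi x, s ^ (k - 1) * Real.exp (-s)

namespace Stmt1Aux

/-- Partial sums of the exponential series. -/
noncomputable def P (k : ℕ) (x : ℝ) : ℝ := ∑ j ∈ Finset.range k, x ^ j / (Nat.factorial j : ℝ)

lemma hasDerivAt_P (k : ℕ) (x : ℝ) : HasDerivAt (P (k + 1)) (P k x) x := by
  have h : HasDerivAt (P (k + 1))
      (∑ j ∈ Finset.range (k + 1), (j : ℝ) * x ^ (j - 1) / (Nat.factorial j : ℝ)) x := by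
    apply HasDerivAt.fun_sum
    intro j _
    simpa using (hasDerivAt_pow j x).div_const (Nat.factorial j : ℝ)
  convert h using 1
  rw [Finset.sum_range_succ']
  simp only [Nat.cast_zero, zero_mul, zero_div, add_zero]
  unfold P
  apply Finset.sum_congr rfl
  intro i _
  have : (Nat.factorial (i + 1) : ℝ) = (i + 1) * Nat.factorial i := by
    push_cast [Nat.factorial_succ]; ring
  rw [this]
  simp only [Nat.add_sub_cancel, Nat.cast_add, Nat.cast_one]
  have hi : (Nat.factorial i : ℝ) ≠ 0 := Nat.cast_ne_zero.mpr (Nat.factorial_ne_zero i)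
  field_simp

lemma P_succ (k : ℕ) (x : ℝ) : P (k + 1) x = P k x + x ^ k / (Nat.factorial k : ℝ) := by
  unfold P; rw [Finset.sum_range_succ]

/-- The "antiderivative" used for the incomplete Gamma identity. -/
noncomputable def G (k : ℕ) (s : ℝ) : ℝ := -((Nat.factorial k : ℝ) * (Real.exp (-s) * P (k + 1) s))

lemma hasDerivAt_G (k : ℕ) (s : ℝ) : HasDerivAt (G k) (s ^ k * Real.exp (-s)) s := by
  have he : HasDerivAt (fun s : ℝ => Real.exp (-s)) (-Real.exp (-s)) s := by
    simpa using (hasDerivAt_neg s).exp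
  have h := ((he.fun_mul (hasDerivAt_P k s)).const_mul (Nat.factorial k : ℝ)).fun_neg
  refine h.congr_deriv (Eq.symm ?_)
  rw [P_succ]
  have hk : (Nat.factorial k : ℝ) ≠ 0 := Nat.cast_ne_zero.mpr (Nat.factorial_ne_zero k)
  field_simp
  ring

lemma tendsto_G (k : ℕ) : Tendsto (G k) atTop (𝓝 0) := by
  have h : ∀ j : ℕ, Tendsto (fun s : ℝ => s ^ j * Real.exp (-s) / (Nat.factorial j : ℝ))
      atTop (𝓝 0) := by
    intro j
    simpa using (tendsto_pow_mul_exp_neg_atTop_nhds_zero j).div_const (Nat.factorial j : ℝ)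
  have hsum : Tendsto (fun s : ℝ => ∑ j ∈ Finset.range (k + 1),
      s ^ j * Real.exp (-s) / (Nat.factorial j : ℝ)) atTop (𝓝 0) := by
    have := tendsto_finset_sum (Finset.range (k + 1)) (fun j _ => h j)
    simpa using this
  have : Tendsto (fun s : ℝ => -((Nat.factorial k : ℝ) * ∑ j ∈ Finset.range (k + 1),
      s ^ j * Real.exp (-s) / (Nat.factorial j : ℝ))) atTop (𝓝 0) := by
    simpa using (hsum.const_mul (Nat.factorial k : ℝ)).neg
  apply this.congr
  intro s
  unfold G P
  rw [Finset.mul_sum, Finset.mul_sum, Finset.mul_sum]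
  congr 1
  apply Finset.sum_congr rfl
  intro j _
  ring

lemma integrableOn_pow_exp (k : ℕ) (x : ℝ) :
    IntegrableOn (fun s : ℝ => s ^ k * Real.exp (-s)) (Ioi x) := by
  have h0 : IntegrableOn (fun s : ℝ => s ^ k * Real.exp (-s)) (Ioi (0 : ℝ)) := by
    apply integrableOn_Ioi_deriv_of_nonneg ((hasDerivAt_G k 0).continuousAt.continuousWithinAt)
      (fun s _ => hasDerivAt_G k s) _ (tendsto_G k)
    intro s hs
    exact mul_nonneg (pow_nonneg (le_of_lt hs) k) (Real.exp_pos _).le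
  rcases le_or_gt 0 x with hx | hx
  · exact h0.mono_set (Ioi_subset_Ioi hx)
  · have hc : IntegrableOn (fun s : ℝ => s ^ k * Real.exp (-s)) (Ioc x 0) :=
      (Continuous.integrableOn_Ioc (by continuity))
    have := hc.union h0
    rwa [Ioc_union_Ioi_eq_Ioi hx.le] at this

lemma uGamma_eq (k : ℕ) (x : ℝ) :
    uGamma (k + 1) x = (Nat.factorial k : ℝ) * (Real.exp (-x) * P (k + 1) x) := by
  have h := integral_Ioi_of_hasDerivAt_of_tendsto
    (f := G k) (f' := fun s => s ^ k * Real.exp (-s)) (a := x) (m := 0)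
    (hasDerivAt_G k x).continuousAt.continuousWithinAt
    (fun s _ => hasDerivAt_G k s) (integrableOn_pow_exp k x) (tendsto_G k)
  unfold uGamma
  simpa [G] using h

end Stmt1Aux

namespace Stmt1Aux

/-- Primitive of `f` starting at `0`. -/
noncomputable def prim (f : ℝ → ℝ) (t : ℝ) : ℝ := ∫ x in (0:ℝ)..t, f x

lemma hasDerivAt_prim {f : ℝ → ℝ} (hf : Continuous f) (t : ℝ) :
    HasDerivAt (prim f) (f t) t :=
  intervalIntegral.integral_hasDerivAt_right (hf.intervalIntegrable 0 t)
    (hf.stronglyMeasurableAtFilter _ _) hf.continuousAt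

lemma continuous_prim {f : ℝ → ℝ} (hf : Continuous f) : Continuous (prim f) :=
  continuous_iff_continuousAt.2 fun t => (hasDerivAt_prim hf t).continuousAt

variable (lam mu : ℝ → ℝ)

/-- The weight `λ(τ) e^{L(τ)+M(τ)}`. -/
noncomputable def Efun (τ : ℝ) : ℝ := lam τ * Real.exp (prim lam τ + prim mu τ)

/-- `A_m(t) = ∫_0^t E(τ) (-M(τ))^m dτ`. -/
noncomputable def Am (m : ℕ) (t : ℝ) : ℝ :=
  ∫ τ in (0:ℝ)..t, Efun lam mu τ * (-(prim mu τ)) ^ m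

/-- `F_j(t) = ∫_0^t E(τ) (M(t)-M(τ))^j dτ`, in expanded binomial form. -/
noncomputable def Ff (j : ℕ) (t : ℝ) : ℝ :=
  ∑ i ∈ Finset.range (j + 1),
    (Nat.choose j i : ℝ) * (prim mu t) ^ i * Am lam mu (j - i) t

/-- `g_k(t) = ∑_{j<k} F_j(t)/j!`. -/
noncomputable def gg (k : ℕ) (t : ℝ) : ℝ :=
  ∑ j ∈ Finset.range k, (1 / (Nat.factorial j : ℝ)) * Ff lam mu j t

variable {lam mu} (hlamc : Continuous lam) (hmuc : Continuous mu)
include hlamc hmuc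

lemma continuous_Efun : Continuous (Efun lam mu) :=
  hlamc.mul (((continuous_prim hlamc).add (continuous_prim hmuc)).rexp)

lemma hasDerivAt_Am (m : ℕ) (t : ℝ) :
    HasDerivAt (Am lam mu m) (Efun lam mu t * (-(prim mu t)) ^ m) t := by
  have hc : Continuous fun τ => Efun lam mu τ * (-(prim mu τ)) ^ m :=
    (continuous_Efun hlamc hmuc).mul ((continuous_prim hmuc).neg.pow m)
  exact intervalIntegral.integral_hasDerivAt_right (hc.intervalIntegrable 0 t)
    (hc.stronglyMeasurableAtFilter _ _) hc.continuousAt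

lemma Ff_eq (j : ℕ) (t : ℝ) :
    Ff lam mu j t = ∫ τ in (0:ℝ)..t, Efun lam mu τ * (prim mu t - prim mu τ) ^ j := by
  have hint : ∀ i : ℕ, Continuous fun τ => Efun lam mu τ * (-(prim mu τ)) ^ i :=
    fun i => (continuous_Efun hlamc hmuc).mul ((continuous_prim hmuc).neg.pow i)
  have key : (fun τ => Efun lam mu τ * (prim mu t - prim mu τ) ^ j)
      = fun τ => ∑ i ∈ Finset.range (j + 1),
        ((Nat.choose j i : ℝ) * (prim mu t) ^ i) * (Efun lam mu τ * (-(prim mu τ)) ^ (j - i)) := by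
    funext τ
    rw [sub_eq_add_neg, add_pow, Finset.mul_sum]
    apply Finset.sum_congr rfl
    intro i _
    ring
  rw [key, intervalIntegral.integral_finset_sum]
  · unfold Ff Am
    apply Finset.sum_congr rfl
    intro i _
    rw [intervalIntegral.integral_const_mul]
  · intro i _
    exact ((continuous_const.mul (hint (j - i))).intervalIntegrable 0 t)

lemma hasDerivAt_Ff_zero (t : ℝ) : HasDerivAt (Ff lam mu 0) (Efun lam mu t) t := by
  have : Ff lam mu 0 = Am lam mu 0 := by
    funext u; unfold Ff; simp
  rw [this]
  simpa using hasDerivAt_Am hlamc hmuc 0 t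

lemma hasDerivAt_Ff_succ (j : ℕ) (t : ℝ) :
    HasDerivAt (Ff lam mu (j + 1)) (((j : ℝ) + 1) * mu t * Ff lam mu j t) t := by
  have hM := hasDerivAt_prim hmuc t
  have hterm : ∀ i ∈ Finset.range (j + 2),
      HasDerivAt (fun u => (Nat.choose (j + 1) i : ℝ) * (prim mu u) ^ i * Am lam mu (j + 1 - i) u)
        ((Nat.choose (j + 1) i : ℝ) * ((i : ℝ) * (prim mu t) ^ (i - 1) * mu t) * Am lam mu (j + 1 - i) t
          + (Nat.choose (j + 1) i : ℝ) * (prim mu t) ^ i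
            * (Efun lam mu t * (-(prim mu t)) ^ (j + 1 - i))) t := by
    intro i _
    exact ((hM.pow i).const_mul _).mul (hasDerivAt_Am hlamc hmuc (j + 1 - i) t)
  have hsum := HasDerivAt.fun_sum hterm
  have heq : (fun u => ∑ i ∈ Finset.range (j + 2),
      (Nat.choose (j + 1) i : ℝ) * (prim mu u) ^ i * Am lam mu (j + 1 - i) u)
      = Ff lam mu (j + 1) := rfl
  rw [heq] at hsum
  refine hsum.congr_deriv (Eq.symm ?_)
  rw [Finset.sum_add_distrib]
  have h2 : (∑ i ∈ Finset.range (j + 2), (Nat.choose (j + 1) i : ℝ) * (prim mu t) ^ i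
      * (Efun lam mu t * (-(prim mu t)) ^ (j + 1 - i))) = 0 := by
    have hb := add_pow (prim mu t) (-(prim mu t)) (j + 1)
    have : (∑ i ∈ Finset.range (j + 2), (Nat.choose (j + 1) i : ℝ) * (prim mu t) ^ i
        * (Efun lam mu t * (-(prim mu t)) ^ (j + 1 - i)))
        = Efun lam mu t * ((prim mu t + -(prim mu t)) ^ (j + 1)) := by
      rw [hb, Finset.mul_sum]
      apply Finset.sum_congr rfl
      intro i _
      ring
    rw [this]
    simp
  rw [h2, add_zero]
  rw [Finset.sum_range_succ']
  simp only [Nat.cast_zero, zero_mul, mul_zero, zero_mul, add_zero]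
  have hFf : ((j : ℝ) + 1) * mu t * Ff lam mu j t
      = ∑ i ∈ Finset.range (j + 1), ((j : ℝ) + 1) * mu t
          * ((Nat.choose j i : ℝ) * (prim mu t) ^ i * Am lam mu (j - i) t) := by
    unfold Ff
    rw [Finset.mul_sum]
  rw [hFf]
  apply Finset.sum_congr rfl
  intro i _
  have h : (j + 1).choose (i + 1) * (i + 1) = (j + 1) * j.choose i := by
    simpa [Nat.succ_eq_add_one] using (Nat.add_one_mul_choose_eq j i).symm
  have hc : ((j + 1).choose (i + 1) : ℝ) * ((i : ℝ) + 1) = ((j : ℝ) + 1) * (j.choose i : ℝ) := by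
    exact_mod_cast h
  have hsub : j + 1 - (i + 1) = j - i := by omega
  have hpow : i + 1 - 1 = i := by omega
  rw [hsub, hpow]
  push_cast
  linear_combination (-(prim mu t ^ i * mu t * Am lam mu (j - i) t)) * hc

lemma hasDerivAt_gg (k : ℕ) (t : ℝ) :
    HasDerivAt (gg lam mu (k + 1)) (Efun lam mu t + mu t * gg lam mu k t) t := by
  have hfun : gg lam mu (k + 1) = fun u =>
      (∑ j ∈ Finset.range k, (1 / (Nat.factorial (j + 1) : ℝ)) * Ff lam mu (j + 1) u)
        + (1 / (Nat.factorial 0 : ℝ)) * Ff lam mu 0 u := by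
    funext u
    unfold gg
    rw [Finset.sum_range_succ']
  rw [hfun]
  have h0 : HasDerivAt (fun u => (1 / (Nat.factorial 0 : ℝ)) * Ff lam mu 0 u)
      (Efun lam mu t) t := by
    simpa using (hasDerivAt_Ff_zero hlamc hmuc t).const_mul (1 / (Nat.factorial 0 : ℝ))
  have hs : HasDerivAt
      (fun u => ∑ j ∈ Finset.range k, (1 / (Nat.factorial (j + 1) : ℝ)) * Ff lam mu (j + 1) u)
      (mu t * gg lam mu k t) t := by
    have h := HasDerivAt.fun_sum (u := Finset.range k)
      (fun j _ => ((hasDerivAt_Ff_succ hlamc hmuc j t).const_mul (1 / (Nat.factorial (j + 1) : ℝ))))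
    refine h.congr_deriv (Eq.symm ?_)
    unfold gg
    rw [Finset.mul_sum]
    apply Finset.sum_congr rfl
    intro j _
    have hfac : (Nat.factorial (j + 1) : ℝ) = ((j : ℝ) + 1) * (Nat.factorial j : ℝ) := by
      push_cast [Nat.factorial_succ]; ring
    have hj : (Nat.factorial j : ℝ) ≠ 0 := Nat.cast_ne_zero.mpr (Nat.factorial_ne_zero j)
    have hj1 : ((j : ℝ) + 1) ≠ 0 := by positivity
    rw [hfac]
    field_simp

  have := hs.fun_add h0
  simpa [add_comm] using this

end Stmt1Aux

/-- `f_k(t; λ, μ) = (1/(k-1)!) ∫_0^t λ(τ) exp(-∫_τ^t λ) Γ(k, ∫_τ^t μ) dτ`. -/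
noncomputable def fk (k : ℕ) (lam mu : ℝ → ℝ) (t : ℝ) : ℝ :=
  (1 / (Nat.factorial (k - 1) : ℝ)) *
    ∫ τ in (0:ℝ)..t,
      lam τ * Real.exp (-∫ x in τ..t, lam x) * uGamma k (∫ x in τ..t, mu x)


namespace Stmt1Aux

variable {lam mu : ℝ → ℝ} (hlamc : Continuous lam) (hmuc : Continuous mu)
include hlamc hmuc

lemma fk_eq (k : ℕ) (t : ℝ) :
    fk (k + 1) lam mu t
      = Real.exp (-(prim lam t + prim mu t)) * gg lam mu (k + 1) t := by
  have hL : ∀ τ : ℝ, (∫ x in τ..t, lam x) = prim lam t - prim lam τ := fun τ =>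
    (intervalIntegral.integral_interval_sub_left (hlamc.intervalIntegrable 0 t)
      (hlamc.intervalIntegrable 0 τ)).symm
  have hM : ∀ τ : ℝ, (∫ x in τ..t, mu x) = prim mu t - prim mu τ := fun τ =>
    (intervalIntegral.integral_interval_sub_left (hmuc.intervalIntegrable 0 t)
      (hmuc.intervalIntegrable 0 τ)).symm
  have hintegrand : (fun τ => lam τ * Real.exp (-∫ x in τ..t, lam x)
        * uGamma (k + 1) (∫ x in τ..t, mu x))
      = fun τ => ((Nat.factorial k : ℝ) * Real.exp (-(prim lam t + prim mu t)))
        * (Efun lam mu τ * P (k + 1) (prim mu t - prim mu τ)) := by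
    funext τ
    rw [hL, hM, uGamma_eq]
    unfold Efun
    have he : Real.exp (-(prim lam t - prim lam τ)) * Real.exp (-(prim mu t - prim mu τ))
        = Real.exp (-(prim lam t + prim mu t)) * Real.exp (prim lam τ + prim mu τ) := by
      rw [← Real.exp_add, ← Real.exp_add]; ring_nf
    linear_combination ((Nat.factorial k : ℝ) * P (k + 1) (prim mu t - prim mu τ) * lam τ) * he
  have hI : (∫ τ in (0:ℝ)..t, Efun lam mu τ * P (k + 1) (prim mu t - prim mu τ))
      = gg lam mu (k + 1) t := by
    have hfun : (fun τ => Efun lam mu τ * P (k + 1) (prim mu t - prim mu τ))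
        = fun τ => ∑ j ∈ Finset.range (k + 1),
            (1 / (Nat.factorial j : ℝ)) * (Efun lam mu τ * (prim mu t - prim mu τ) ^ j) := by
      funext τ
      unfold P
      rw [Finset.mul_sum]
      apply Finset.sum_congr rfl
      intro j _
      ring
    rw [hfun, intervalIntegral.integral_finset_sum]
    · unfold gg
      apply Finset.sum_congr rfl
      intro j _
      rw [intervalIntegral.integral_const_mul, ← Ff_eq hlamc hmuc]
    · intro j _
      exact ((continuous_const.mul ((continuous_Efun hlamc hmuc).mul
        ((continuous_const.sub (continuous_prim hmuc)).pow j))).intervalIntegrable 0 t)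
  unfold fk
  simp only [Nat.add_sub_cancel]
  rw [hintegrand, intervalIntegral.integral_const_mul, hI]
  have hk : (Nat.factorial k : ℝ) ≠ 0 := Nat.cast_ne_zero.mpr (Nat.factorial_ne_zero k)
  field_simp

end Stmt1Aux


open Stmt1Aux in
/-- For continuous nonnegative `λ, μ` and an integer `k ≥ 2`, `f_k(0; λ, μ) = 0`
and `f_k` is differentiable in `t` with
`f_k'(t) = -(μ(t) + λ(t)) f_k(t) + μ(t) f_{k-1}(t) + λ(t)` for all `t ≥ 0`. -/
theorem stmt1 (lam mu : ℝ → ℝ) (hlamc : Continuous lam) (hmuc : Continuous mu)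
    (hlam : ∀ x, 0 ≤ lam x) (hmu : ∀ x, 0 ≤ mu x)
    (k : ℕ) (hk : 2 ≤ k) :
    fk k lam mu 0 = 0 ∧
      ∀ t, 0 ≤ t → HasDerivAt (fk k lam mu)
        (-(mu t + lam t) * fk k lam mu t + mu t * fk (k - 1) lam mu t + lam t) t := by
  obtain ⟨K, rfl⟩ : ∃ K, k = K + 2 := ⟨k - 2, by omega⟩
  constructor
  · unfold fk
    rw [intervalIntegral.integral_same, mul_zero]
  · intro t _
    have e1 : fk (K + 2) lam mu
        = fun u => Real.exp (-(prim lam u + prim mu u)) * gg lam mu (K + 2) u :=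
      funext fun u => fk_eq hlamc hmuc (K + 1) u
    have e2 : fk (K + 2 - 1) lam mu
        = fun u => Real.exp (-(prim lam u + prim mu u)) * gg lam mu (K + 1) u :=
      funext fun u => fk_eq hlamc hmuc K u
    rw [e1, e2]
    have hLM : HasDerivAt (fun u => -(prim lam u + prim mu u)) (-(lam t + mu t)) t :=
      ((hasDerivAt_prim hlamc t).add (hasDerivAt_prim hmuc t)).neg
    have hexp := hLM.exp
    have hgg := hasDerivAt_gg hlamc hmuc (K + 1) t
    have h := hexp.fun_mul hgg
    refine h.congr_deriv (Eq.symm ?_)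
    unfold Efun
    have he : Real.exp (-(prim lam t + prim mu t)) * Real.exp (prim lam t + prim mu t) = 1 := by
      rw [← Real.exp_add, show -(prim lam t + prim mu t) + (prim lam t + prim mu t) = 0 by ring,
        Real.exp_zero]
    linear_combination (-(lam t)) * he
end

section
/- Let λ, μ : ℝ → ℝ be continuous nonnegative functions, let k ≥ 2 be an integer, and let T > 0. If g : ℝ → ℝ is differentiable on [0, T] with g(0) = 0 and g'(t) = -(μ(t) + λ(t)) · g(t) + μ(t) · f_{k-1}(t; λ, μ) + λ(t) for all t ∈ [0, T], then g(t) = f_k(t; λ, μ) for all t ∈ [0, T]. -/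
open MeasureTheory Real Set Filter Topology intervalIntegral
open Finset

lemma poly_deriv (m : ℕ) (s : ℝ) :
    HasDerivAt (fun s : ℝ => ∑ j ∈ range (m+1), ((m.factorial : ℝ)/(j.factorial)) * s ^ j)
      ((∑ j ∈ range (m+1), ((m.factorial : ℝ)/(j.factorial)) * s ^ j) - s ^ m) s := by
  have h : HasDerivAt (fun s : ℝ => ∑ j ∈ range (m+1), ((m.factorial : ℝ)/(j.factorial)) * s ^ j)
      (∑ j ∈ range (m+1), ((m.factorial : ℝ)/(j.factorial)) * ((j : ℝ) * s ^ (j-1))) s := by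
    apply HasDerivAt.fun_sum
    intro j _
    exact (hasDerivAt_pow j s).const_mul _
  convert h using 1
  rw [Finset.sum_range_succ' (fun j => ((m.factorial : ℝ)/(j.factorial)) * ((j:ℝ) * s ^ (j-1)))]
  rw [Finset.sum_range_succ (fun j => ((m.factorial : ℝ)/(j.factorial)) * s ^ j)]
  simp only [Nat.factorial_zero, Nat.cast_zero, zero_mul, mul_zero, add_zero,
    Nat.cast_one, div_self, Nat.add_sub_cancel]
  rw [div_self (by positivity : ((m.factorial : ℝ)) ≠ 0)]
  rw [one_mul, add_sub_cancel_right]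
  apply Finset.sum_congr rfl
  intro j _
  have h1 : ((j+1).factorial : ℝ) = (j+1) * (j.factorial : ℝ) := by
    rw [Nat.factorial_succ]; push_cast; ring
  rw [h1]
  have h2 : ((j:ℝ)+1) ≠ 0 := by positivity
  have h3 : ((j.factorial : ℝ)) ≠ 0 := by positivity
  field_simp
  push_cast
  ring

lemma F_deriv (m : ℕ) (s : ℝ) :
    HasDerivAt (fun s : ℝ => -(Real.exp (-s) * ∑ j ∈ range (m+1), ((m.factorial : ℝ)/(j.factorial)) * s ^ j))
      (s ^ m * Real.exp (-s)) s := by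
  have he : HasDerivAt (fun s : ℝ => Real.exp (-s)) (-Real.exp (-s)) s := by
    simpa using ((hasDerivAt_neg s).exp)
  have := (he.fun_mul (poly_deriv m s)).fun_neg
  refine this.congr_deriv ?_
  ring

lemma F_tendsto (m : ℕ) :
    Tendsto (fun s : ℝ => -(Real.exp (-s) * ∑ j ∈ range (m+1), ((m.factorial : ℝ)/(j.factorial)) * s ^ j))
      atTop (𝓝 0) := by
  have h : Tendsto (fun s : ℝ => ∑ j ∈ range (m+1), ((m.factorial : ℝ)/(j.factorial)) * (s ^ j * Real.exp (-s)))
      atTop (𝓝 (∑ j ∈ range (m+1), ((m.factorial : ℝ)/(j.factorial)) * 0)) := by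
    apply tendsto_finset_sum
    intro j _
    exact (tendsto_pow_mul_exp_neg_atTop_nhds_zero j).const_mul _
  simp only [mul_zero, Finset.sum_const_zero] at h
  have : Tendsto (fun s : ℝ => -∑ j ∈ range (m+1), ((m.factorial : ℝ)/(j.factorial)) * (s ^ j * Real.exp (-s))) atTop (𝓝 (-0)) := h.neg
  rw [neg_zero] at this
  apply this.congr
  intro s
  rw [Finset.mul_sum, ← Finset.sum_neg_distrib, ← Finset.sum_neg_distrib]
  apply Finset.sum_congr rfl
  intro j _
  ring

lemma integrableOn_pow_exp (m : ℕ) (x : ℝ) :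
    IntegrableOn (fun s : ℝ => s ^ m * Real.exp (-s)) (Ioi x) := by
  have hc : Continuous (fun s : ℝ => s ^ m * Real.exp (-s)) :=
    (continuous_pow m).mul (Real.continuous_exp.comp continuous_neg)
  have h1 : IntegrableOn (fun s : ℝ => s ^ m * Real.exp (-s)) (Ioi 0) := by
    apply integrableOn_Ioi_deriv_of_nonneg (g := fun s : ℝ => -(Real.exp (-s) * ∑ j ∈ range (m+1), ((m.factorial : ℝ)/(j.factorial)) * s ^ j))
    · exact ((F_deriv m 0).continuousAt).continuousWithinAt
    · intro s _; exact F_deriv m s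
    · intro s hs
      have : (0:ℝ) < s := hs
      positivity
    · exact F_tendsto m
  have h2 : IntegrableOn (fun s : ℝ => s ^ m * Real.exp (-s)) (Ioc x 0) :=
    hc.continuousOn.integrableOn_Icc.mono_set Ioc_subset_Icc_self
  apply (h2.union h1).mono_set
  intro s hs
  rcases le_or_gt s 0 with h | h
  · exact Or.inl ⟨hs, h⟩
  · exact Or.inr h

lemma integral_pow_exp (m : ℕ) (x : ℝ) :
    (∫ s in Ioi x, s ^ m * Real.exp (-s))
      = Real.exp (-x) * ∑ j ∈ range (m+1), ((m.factorial : ℝ)/(j.factorial)) * x ^ j := by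
  have := integral_Ioi_of_hasDerivAt_of_tendsto
    (f := fun s : ℝ => -(Real.exp (-s) * ∑ j ∈ range (m+1), ((m.factorial : ℝ)/(j.factorial)) * s ^ j))
    (f' := fun s : ℝ => s ^ m * Real.exp (-s))
    ((F_deriv m x).continuousAt).continuousWithinAt
    (fun s _ => F_deriv m s) (integrableOn_pow_exp m x) (F_tendsto m)
  rw [this]; ring

lemma uGamma_eq (k : ℕ) (hk : 1 ≤ k) (x : ℝ) :
    uGamma k x = Real.exp (-x) * ∑ j ∈ range k, (((k-1).factorial : ℝ)/(j.factorial)) * x ^ j := by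
  rw [uGamma, integral_pow_exp (k-1) x, Nat.sub_add_cancel hk]

lemma expand (u w : ℝ → ℝ) (hu : Continuous u) (hw : Continuous w) (n : ℕ) (t : ℝ) :
    (∫ τ in (0:ℝ)..t, w τ * (u t - u τ)^n)
      = ∑ i ∈ range (n+1), (-1:ℝ)^(i+n) * (u t)^i * (n.choose i) *
          ∫ τ in (0:ℝ)..t, w τ * (u τ)^(n-i) := by
  calc (∫ τ in (0:ℝ)..t, w τ * (u t - u τ)^n)
      = ∫ τ in (0:ℝ)..t, ∑ i ∈ range (n+1),
          ((-1:ℝ)^(i+n) * (u t)^i * (n.choose i)) * (w τ * (u τ)^(n-i)) := by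
        apply intervalIntegral.integral_congr
        intro τ _
        simp only [sub_pow, Finset.mul_sum]
        apply Finset.sum_congr rfl
        intro i _
        ring
    _ = ∑ i ∈ range (n+1), ∫ τ in (0:ℝ)..t,
          ((-1:ℝ)^(i+n) * (u t)^i * (n.choose i)) * (w τ * (u τ)^(n-i)) := by
        apply intervalIntegral.integral_finset_sum
        intro i _
        exact (continuous_const.mul (hw.mul (hu.pow _))).intervalIntegrable _ _
    _ = ∑ i ∈ range (n+1), (-1:ℝ)^(i+n) * (u t)^i * (n.choose i) *
          ∫ τ in (0:ℝ)..t, w τ * (u τ)^(n-i) := by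
        apply Finset.sum_congr rfl
        intro i _
        rw [intervalIntegral.integral_const_mul]

lemma hasDerivAt_A (u w mu : ℝ → ℝ) (hu : ∀ s, HasDerivAt u (mu s) s) (hw : Continuous w)
    (j : ℕ) (t : ℝ) :
    HasDerivAt (fun r => ∫ τ in (0:ℝ)..r, w τ * (u r - u τ)^j)
      (w t * (0:ℝ)^j + (j:ℝ) * mu t * ∫ τ in (0:ℝ)..t, w τ * (u t - u τ)^(j-1)) t := by
  have huc : Continuous u := (Differentiable.continuous (fun s => (hu s).differentiableAt))
  have hVd : ∀ (m : ℕ) (s : ℝ), HasDerivAt (fun r => ∫ τ in (0:ℝ)..r, w τ * (u τ)^m)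
      (w s * (u s)^m) s := by
    intro m s
    exact intervalIntegral.integral_hasDerivAt_right
      ((hw.mul (huc.pow m)).intervalIntegrable _ _)
      ((hw.mul (huc.pow m)).stronglyMeasurableAtFilter _ _)
      (hw.mul (huc.pow m)).continuousAt
  have hsum : HasDerivAt (fun r => ∑ i ∈ range (j+1), (-1:ℝ)^(i+j) * (u r)^i * (j.choose i) *
        ∫ τ in (0:ℝ)..r, w τ * (u τ)^(j-i))
      (∑ i ∈ range (j+1),
        ((-1:ℝ)^(i+j) * ((i:ℝ) * (u t)^(i-1) * mu t) * (j.choose i) *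
            (∫ τ in (0:ℝ)..t, w τ * (u τ)^(j-i))
         + (-1:ℝ)^(i+j) * (u t)^i * (j.choose i) * (w t * (u t)^(j-i)))) t := by
    apply HasDerivAt.fun_sum
    intro i _
    have h1 : HasDerivAt (fun r => (-1:ℝ)^(i+j) * (u r)^i * (j.choose i))
        ((-1:ℝ)^(i+j) * ((i:ℝ) * (u t)^(i-1) * mu t) * (j.choose i)) t := by
      exact (((hu t).pow i).const_mul ((-1:ℝ)^(i+j))).mul_const _
    exact h1.mul (hVd (j-i) t)
  have hfin : HasDerivAt (fun r => ∫ τ in (0:ℝ)..r, w τ * (u r - u τ)^j)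
      (∑ i ∈ range (j+1),
        ((-1:ℝ)^(i+j) * ((i:ℝ) * (u t)^(i-1) * mu t) * (j.choose i) *
            (∫ τ in (0:ℝ)..t, w τ * (u τ)^(j-i))
         + (-1:ℝ)^(i+j) * (u t)^i * (j.choose i) * (w t * (u t)^(j-i)))) t :=
    hsum.congr_of_eventuallyEq (Eventually.of_forall (fun r => expand u w huc hw j r))
  convert hfin using 1
  rw [Finset.sum_add_distrib]
  have h2 : (∑ i ∈ range (j+1), (-1:ℝ)^(i+j) * (u t)^i * (j.choose i) * (w t * (u t)^(j-i)))
      = w t * (0:ℝ)^j := by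
    calc (∑ i ∈ range (j+1), (-1:ℝ)^(i+j) * (u t)^i * (j.choose i) * (w t * (u t)^(j-i)))
        = w t * ∑ i ∈ range (j+1), (-1:ℝ)^(i+j) * (u t)^i * (u t)^(j-i) * (j.choose i) := by
          rw [Finset.mul_sum]
          apply Finset.sum_congr rfl
          intro i _
          ring
      _ = w t * (u t - u t)^j := by rw [← sub_pow]
      _ = w t * (0:ℝ)^j := by rw [sub_self]
  rw [h2]
  rcases j with _ | n
  · simp
  · have h1 : (∑ i ∈ range (n+2),
        (-1:ℝ)^(i+(n+1)) * ((i:ℝ) * (u t)^(i-1) * mu t) * ((n+1).choose i) *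
          (∫ τ in (0:ℝ)..t, w τ * (u τ)^(n+1-i)))
        = ((n:ℝ)+1) * mu t * ∫ τ in (0:ℝ)..t, w τ * (u t - u τ)^n := by
      rw [Finset.sum_range_succ' (fun i => (-1:ℝ)^(i+(n+1)) * ((i:ℝ) * (u t)^(i-1) * mu t) *
          ((n+1).choose i) * (∫ τ in (0:ℝ)..t, w τ * (u τ)^(n+1-i)))]
      simp only [Nat.cast_zero, zero_mul, mul_zero, zero_mul, add_zero]
      rw [expand u w huc hw n t, Finset.mul_sum]
      apply Finset.sum_congr rfl
      intro i _
      have hsign : (-1:ℝ)^(i+1+(n+1)) = (-1:ℝ)^(i+n) := by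
        rw [show i+1+(n+1) = (i+n)+2 from by ring, pow_add]
        norm_num
      have hch : ((n:ℝ)+1) * (n.choose i) = ((n+1).choose (i+1)) * ((i:ℝ)+1) := by
        have := Nat.add_one_mul_choose_eq n i
        exact_mod_cast congrArg (Nat.cast : ℕ → ℝ) this
      have hni : n + 1 - (i+1) = n - i := by omega
      rw [hni, hsign]
      push_cast
      linear_combination (-((-1:ℝ)^(i+n) * (u t)^i * mu t *
        (∫ τ in (0:ℝ)..t, w τ * (u τ)^(n-i)))) * hch
    rw [h1]
    push_cast
    simp [Nat.succ_sub_one]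

lemma hasDerivAt_N (u w mu : ℝ → ℝ) (hu : ∀ s, HasDerivAt u (mu s) s) (hw : Continuous w)
    (k : ℕ) (hk : 1 ≤ k) (t : ℝ) :
    HasDerivAt (fun r => ∑ j ∈ range k, (1/(j.factorial):ℝ) * ∫ τ in (0:ℝ)..r, w τ * (u r - u τ)^j)
      (w t + mu t * ∑ j ∈ range (k-1), (1/(j.factorial):ℝ) *
        ∫ τ in (0:ℝ)..t, w τ * (u t - u τ)^j) t := by
  obtain ⟨m, rfl⟩ : ∃ m, k = m + 1 := ⟨k - 1, by omega⟩
  have h : HasDerivAt (fun r => ∑ j ∈ range (m+1), (1/(j.factorial):ℝ) *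
        ∫ τ in (0:ℝ)..r, w τ * (u r - u τ)^j)
      (∑ j ∈ range (m+1), (1/(j.factorial):ℝ) *
        (w t * (0:ℝ)^j + (j:ℝ) * mu t * ∫ τ in (0:ℝ)..t, w τ * (u t - u τ)^(j-1))) t := by
    apply HasDerivAt.fun_sum
    intro j _
    exact (hasDerivAt_A u w mu hu hw j t).const_mul _
  convert h using 1
  rw [Finset.sum_range_succ' (fun j => (1/(j.factorial):ℝ) *
      (w t * (0:ℝ)^j + (j:ℝ) * mu t * ∫ τ in (0:ℝ)..t, w τ * (u t - u τ)^(j-1)))]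
  simp only [Nat.factorial_zero, Nat.cast_one, Nat.cast_zero, zero_mul, pow_zero, mul_one,
    add_zero, one_div, inv_one, one_mul, Nat.add_sub_cancel]
  rw [add_comm]
  congr 1
  rw [Finset.mul_sum]
  apply Finset.sum_congr rfl
  intro i _
  have h1 : ((i+1).factorial : ℝ) = ((i:ℝ)+1) * (i.factorial : ℝ) := by
    rw [Nat.factorial_succ]; push_cast; ring
  rw [zero_pow (Nat.succ_ne_zero i), h1]
  have h2 : ((i:ℝ)+1) ≠ 0 := by positivity
  have h3 : ((i.factorial : ℝ)) ≠ 0 := by positivity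
  push_cast
  field_simp
  ring

noncomputable def Lp (f : ℝ → ℝ) (s : ℝ) : ℝ := ∫ x in (0:ℝ)..s, f x

noncomputable def ww (lam mu : ℝ → ℝ) (τ : ℝ) : ℝ :=
  lam τ * Real.exp (Lp lam τ + Lp mu τ)

noncomputable def Nn (k : ℕ) (lam mu : ℝ → ℝ) (r : ℝ) : ℝ :=
  ∑ j ∈ range k, (1/(j.factorial):ℝ) * ∫ τ in (0:ℝ)..r, ww lam mu τ * (Lp mu r - Lp mu τ)^j

lemma hasDerivAt_Lp {f : ℝ → ℝ} (hf : Continuous f) (s : ℝ) : HasDerivAt (Lp f) (f s) s :=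
  intervalIntegral.integral_hasDerivAt_right (hf.intervalIntegrable _ _)
    (hf.stronglyMeasurableAtFilter _ _) hf.continuousAt

lemma continuous_Lp {f : ℝ → ℝ} (hf : Continuous f) : Continuous (Lp f) :=
  Differentiable.continuous (fun s => (hasDerivAt_Lp hf s).differentiableAt)

lemma continuous_ww {lam mu : ℝ → ℝ} (hlamc : Continuous lam) (hmuc : Continuous mu) :
    Continuous (ww lam mu) :=
  hlamc.mul (Real.continuous_exp.comp ((continuous_Lp hlamc).add (continuous_Lp hmuc)))

lemma hasDerivAt_Nn {lam mu : ℝ → ℝ} (hlamc : Continuous lam) (hmuc : Continuous mu)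
    (k : ℕ) (hk : 1 ≤ k) (t : ℝ) :
    HasDerivAt (Nn k lam mu) (ww lam mu t + mu t * Nn (k-1) lam mu t) t :=
  hasDerivAt_N (Lp mu) (ww lam mu) mu (hasDerivAt_Lp hmuc) (continuous_ww hlamc hmuc) k hk t

lemma fk_rel {lam mu : ℝ → ℝ} (hlamc : Continuous lam) (hmuc : Continuous mu)
    (k : ℕ) (hk : 1 ≤ k) (t : ℝ) :
    Real.exp (Lp lam t + Lp mu t) * fk k lam mu t = Nn k lam mu t := by
  have hfac : ((k-1).factorial : ℝ) ≠ 0 := by positivity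
  have hptw : EqOn (fun τ => lam τ * Real.exp (-∫ x in τ..t, lam x) * uGamma k (∫ x in τ..t, mu x))
      (fun τ => (Real.exp (-(Lp lam t + Lp mu t)) * (((k-1).factorial : ℝ))) *
        (ww lam mu τ * ∑ j ∈ range k, (1/(j.factorial):ℝ) * (Lp mu t - Lp mu τ)^j))
      (Set.uIcc 0 t) := by
    intro τ _
    have hsubl : (∫ x in τ..t, lam x) = Lp lam t - Lp lam τ :=
      (intervalIntegral.integral_interval_sub_left (hlamc.intervalIntegrable 0 t)
        (hlamc.intervalIntegrable 0 τ)).symm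
    have hsubm : (∫ x in τ..t, mu x) = Lp mu t - Lp mu τ :=
      (intervalIntegral.integral_interval_sub_left (hmuc.intervalIntegrable 0 t)
        (hmuc.intervalIntegrable 0 τ)).symm
    simp only [ww]
    rw [hsubl, hsubm, uGamma_eq k hk]
    have hS : ∑ j ∈ range k, (((k-1).factorial:ℝ)/(j.factorial)) * (Lp mu t - Lp mu τ)^j
        = ((k-1).factorial : ℝ) * ∑ j ∈ range k, (1/(j.factorial):ℝ) * (Lp mu t - Lp mu τ)^j := by
      rw [Finset.mul_sum]
      apply Finset.sum_congr rfl
      intro j _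
      ring
    rw [hS]
    rw [show -(Lp lam t - Lp lam τ) = Lp lam τ - Lp lam t from by ring,
       show -(Lp mu t - Lp mu τ) = Lp mu τ - Lp mu t from by ring,
       Real.exp_sub, Real.exp_sub, Real.exp_neg, Real.exp_add, Real.exp_add]
    field_simp
  have hIeq : (∫ τ in (0:ℝ)..t, ww lam mu τ * ∑ j ∈ range k, (1/(j.factorial):ℝ) * (Lp mu t - Lp mu τ)^j)
      = ∑ j ∈ range k, (1/(j.factorial):ℝ) * ∫ τ in (0:ℝ)..t, ww lam mu τ * (Lp mu t - Lp mu τ)^j := by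
    have hwc := continuous_ww hlamc hmuc
    have hxc : Continuous (fun τ => Lp mu t - Lp mu τ) :=
      continuous_const.sub (continuous_Lp hmuc)
    calc (∫ τ in (0:ℝ)..t, ww lam mu τ * ∑ j ∈ range k, (1/(j.factorial):ℝ) * (Lp mu t - Lp mu τ)^j)
        = ∫ τ in (0:ℝ)..t, ∑ j ∈ range k, (1/(j.factorial):ℝ) * (ww lam mu τ * (Lp mu t - Lp mu τ)^j) := by
          apply intervalIntegral.integral_congr
          intro τ _
          simp only [Finset.mul_sum]
          apply Finset.sum_congr rfl
          intro j _
          ring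
      _ = ∑ j ∈ range k, ∫ τ in (0:ℝ)..t, (1/(j.factorial):ℝ) * (ww lam mu τ * (Lp mu t - Lp mu τ)^j) := by
          apply intervalIntegral.integral_finset_sum
          intro j _
          exact (continuous_const.mul (hwc.mul (hxc.pow j))).intervalIntegrable _ _
      _ = ∑ j ∈ range k, (1/(j.factorial):ℝ) * ∫ τ in (0:ℝ)..t, ww lam mu τ * (Lp mu t - Lp mu τ)^j := by
          apply Finset.sum_congr rfl
          intro j _
          rw [intervalIntegral.integral_const_mul]
  rw [fk, intervalIntegral.integral_congr hptw, intervalIntegral.integral_const_mul, hIeq, Nn]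
  rw [Real.exp_neg]
  field_simp

/-- uniqueness of the solution of the ODE satisfied by `f_k` on `[0, T]`. -/
theorem stmt2 (lam mu : ℝ → ℝ) (hlamc : Continuous lam) (hmuc : Continuous mu)
    (hlam : ∀ x, 0 ≤ lam x) (hmu : ∀ x, 0 ≤ mu x)
    (k : ℕ) (hk : 2 ≤ k) (T : ℝ) (hT : 0 < T)
    (g : ℝ → ℝ) (hg0 : g 0 = 0)
    (hg : ∀ t ∈ Set.Icc (0:ℝ) T,
      HasDerivWithinAt g
        (-(mu t + lam t) * g t + mu t * fk (k - 1) lam mu t + lam t) (Set.Icc 0 T) t) :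
    ∀ t ∈ Set.Icc (0:ℝ) T, g t = fk k lam mu t := by
  have hk1 : 1 ≤ k := by omega
  have hk1' : 1 ≤ k - 1 := by omega
  have hL := hasDerivAt_Lp hlamc
  have hU := hasDerivAt_Lp hmuc
  set G : ℝ → ℝ := fun r => Real.exp (Lp lam r + Lp mu r) * g r - Nn k lam mu r with hGdef
  have hGd : ∀ t ∈ Set.Icc (0:ℝ) T, HasDerivWithinAt G 0 (Set.Icc 0 T) t := by
    intro t ht
    have hexp : HasDerivAt (fun r => Real.exp (Lp lam r + Lp mu r))
        (Real.exp (Lp lam t + Lp mu t) * (lam t + mu t)) t := ((hL t).add (hU t)).exp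
    have h1 := (hexp.hasDerivWithinAt.fun_mul (hg t ht)).fun_sub
      (hasDerivAt_Nn hlamc hmuc k hk1 t).hasDerivWithinAt
    refine h1.congr_deriv ?_
    rw [← fk_rel hlamc hmuc (k-1) hk1' t]
    simp only [ww]
    ring
  have hGc : ContinuousOn G (Set.Icc 0 T) := fun t ht => (hGd t ht).continuousWithinAt
  have hG0 : G 0 = 0 := by
    simp only [hGdef, hg0, mul_zero, zero_sub, neg_eq_zero, Nn]
    apply Finset.sum_eq_zero
    intro j _
    simp [intervalIntegral.integral_same]
  have key : ∀ x ∈ Set.Icc (0:ℝ) T, G x = G 0 := by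
    apply constant_of_has_deriv_right_zero hGc
    intro x hx
    apply (hGd x ⟨hx.1, hx.2.le⟩).mono_of_mem_nhdsWithin
    have h1 : Set.Ici x ∩ Set.Iic T ∈ 𝓝[Set.Ici x] x :=
      inter_mem_nhdsWithin (Set.Ici x) (Iic_mem_nhds hx.2)
    apply Filter.mem_of_superset h1
    rw [Set.Ici_inter_Iic]
    exact Set.Icc_subset_Icc_left hx.1
  intro t ht
  have hGt : G t = 0 := by rw [key t ht, hG0]
  have hfin : Real.exp (Lp lam t + Lp mu t) * g t
      = Real.exp (Lp lam t + Lp mu t) * fk k lam mu t := by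
    rw [fk_rel hlamc hmuc k hk1 t]
    simpa [hGdef, sub_eq_zero] using hGt
  exact mul_left_cancel₀ (Real.exp_ne_zero _) hfin
end

section
/- Let μ : ℝ → ℝ be a continuous nonnegative function, let k ≥ 1 be an integer, and fix t ≥ 0. Then the functional λ ↦ f_k(t; λ, μ) is concave on the set of continuous nonnegative functions: for all continuous nonnegative λ_1, λ_2 : ℝ → ℝ and all α ∈ (0,1), f_k(t; α·λ_1 + (1-α)·λ_2, μ) ≥ α · f_k(t; λ_1, μ) + (1-α) · f_k(t; λ_2, μ). -/
open MeasureTheory Real Set Filter Topology intervalIntegral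

lemma hInt (n : ℕ) (x : ℝ) :
    IntegrableOn (fun s : ℝ => s ^ n * Real.exp (-s)) (Ioi x) := by
  have h0 : IntegrableOn (fun s : ℝ => s ^ n * Real.exp (-s)) (Ioi 0) := by
    have := Real.GammaIntegral_convergent (s := (n + 1 : ℝ)) (by positivity)
    refine this.congr_fun (fun s hs => ?_) measurableSet_Ioi
    rw [add_sub_cancel_right]; dsimp only; rw [Real.rpow_natCast, mul_comm]
  have h1 : IntegrableOn (fun s : ℝ => s ^ n * Real.exp (-s)) (Ioc x 0) := by
    apply Continuous.integrableOn_Ioc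
    continuity
  refine (h1.union h0).mono_set (fun s hs => ?_)
  rcases le_or_gt s 0 with h | h
  · exact Or.inl ⟨hs, h⟩
  · exact Or.inr h

lemma uGamma_eq_s3 (k : ℕ) (x : ℝ) :
    uGamma k x = uGamma k 0 - ∫ s in (0:ℝ)..x, s ^ (k-1) * Real.exp (-s) := by
  set h : ℝ → ℝ := fun s => s ^ (k-1) * Real.exp (-s) with hh
  rcases le_or_gt 0 x with hx | hx
  · rw [intervalIntegral.integral_of_le hx]
    have : (∫ s in Ioc (0:ℝ) x, h s) + (∫ s in Ioi x, h s) = ∫ s in Ioi (0:ℝ), h s := by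
      have hdisj : Disjoint (Ioc (0:ℝ) x) (Ioi x) := Ioc_disjoint_Ioi le_rfl
      rw [← setIntegral_union hdisj measurableSet_Ioi
        ((hInt (k-1) 0).mono_set Ioc_subset_Ioi_self) (hInt (k-1) x),
        Ioc_union_Ioi_eq_Ioi hx]
    simp only [uGamma]
    linarith
  · rw [intervalIntegral.integral_of_ge hx.le]
    have : (∫ s in Ioc x (0:ℝ), h s) + (∫ s in Ioi (0:ℝ), h s) = ∫ s in Ioi x, h s := by
      have hdisj : Disjoint (Ioc x (0:ℝ)) (Ioi 0) := Ioc_disjoint_Ioi le_rfl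
      rw [← setIntegral_union hdisj measurableSet_Ioi
        ((hInt (k-1) x).mono_set Ioc_subset_Ioi_self) (hInt (k-1) 0), Ioc_union_Ioi_eq_Ioi hx.le]
    simp only [uGamma]
    linarith

lemma uGamma_hasDeriv (k : ℕ) (x : ℝ) :
    HasDerivAt (uGamma k) (-(x ^ (k-1) * Real.exp (-x))) x := by
  have hc : Continuous (fun s : ℝ => s ^ (k-1) * Real.exp (-s)) := by continuity
  have hd : HasDerivAt (fun y => uGamma k 0 - ∫ s in (0:ℝ)..y, s ^ (k-1) * Real.exp (-s))
      (-(x ^ (k-1) * Real.exp (-x))) x := by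
    exact ((intervalIntegral.integral_hasDerivAt_right (hc.intervalIntegrable 0 x)
      (hc.stronglyMeasurable.stronglyMeasurableAtFilter) hc.continuousAt)).const_sub _
  exact hd.congr_of_eventuallyEq (Eventually.of_forall fun y => uGamma_eq_s3 k y)

lemma uGamma_nonneg (k : ℕ) {x : ℝ} (hx : 0 ≤ x) : 0 ≤ uGamma k x := by
  refine setIntegral_nonneg measurableSet_Ioi fun s hs => ?_
  have : (0:ℝ) ≤ s := hx.trans (le_of_lt hs)
  positivity

lemma Mderiv {f : ℝ → ℝ} (hf : Continuous f) (t τ : ℝ) :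
    HasDerivAt (fun u => ∫ x in u..t, f x) (-(f τ)) τ :=
  intervalIntegral.integral_hasDerivAt_left (hf.intervalIntegrable τ t)
    (hf.stronglyMeasurable.stronglyMeasurableAtFilter) hf.continuousAt

lemma key (k : ℕ) (t : ℝ) (mu lam : ℝ → ℝ) (hmuc : Continuous mu) (hlc : Continuous lam) :
    (∫ τ in (0:ℝ)..t, lam τ * Real.exp (-∫ x in τ..t, lam x) * uGamma k (∫ x in τ..t, mu x))
    = uGamma k 0 - uGamma k (∫ x in (0:ℝ)..t, mu x) * Real.exp (-∫ x in (0:ℝ)..t, lam x)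
      - ∫ τ in (0:ℝ)..t, (mu τ * ((∫ x in τ..t, mu x) ^ (k-1)
          * Real.exp (-(∫ x in τ..t, mu x)))) * Real.exp (-∫ x in τ..t, lam x) := by
  set M : ℝ → ℝ := fun τ => ∫ x in τ..t, mu x with hM
  set Λ : ℝ → ℝ := fun τ => ∫ x in τ..t, lam x with hΛ
  have hMc : Continuous M := continuous_iff_continuousAt.2 fun τ => (Mderiv hmuc t τ).continuousAt
  have hΛc : Continuous Λ := continuous_iff_continuousAt.2 fun τ => (Mderiv hlc t τ).continuousAt
  have huGc : Continuous (uGamma k) :=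
    continuous_iff_continuousAt.2 fun x => (uGamma_hasDeriv k x).continuousAt
  set u : ℝ → ℝ := fun τ => uGamma k (M τ) with hu
  set u' : ℝ → ℝ := fun τ => mu τ * ((M τ) ^ (k-1) * Real.exp (-(M τ))) with hu'
  set v : ℝ → ℝ := fun τ => Real.exp (-(Λ τ)) with hv
  set v' : ℝ → ℝ := fun τ => lam τ * Real.exp (-(Λ τ)) with hv'
  have hud : ∀ τ ∈ uIcc (0:ℝ) t, HasDerivAt u (u' τ) τ := by
    intro τ _
    have := (uGamma_hasDeriv k (M τ)).comp τ (Mderiv hmuc t τ)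
    refine this.congr_deriv ?_
    simp only [hu']; ring
  have hvd : ∀ τ ∈ uIcc (0:ℝ) t, HasDerivAt v (v' τ) τ := by
    intro τ _
    have := (Real.hasDerivAt_exp (-(Λ τ))).comp τ ((Mderiv hlc t τ).neg)
    refine this.congr_deriv ?_
    simp only [hv']; ring
  have hu'i : IntervalIntegrable u' volume 0 t := by
    apply Continuous.intervalIntegrable
    exact hmuc.mul ((hMc.pow _).mul (hMc.neg.rexp))
  have hv'i : IntervalIntegrable v' volume 0 t := by
    apply Continuous.intervalIntegrable
    exact hlc.mul (hΛc.neg.rexp)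
  have hibp := intervalIntegral.integral_mul_deriv_eq_deriv_mul hud hvd hu'i hv'i
  have h1 : (∫ τ in (0:ℝ)..t, lam τ * Real.exp (-Λ τ) * uGamma k (M τ))
      = ∫ τ in (0:ℝ)..t, u τ * v' τ := by
    apply intervalIntegral.integral_congr
    intro τ _
    simp only [hu, hv']; ring
  have h2 : u t = uGamma k 0 := by simp [hu, hM]
  have h3 : v t = 1 := by simp [hv, hΛ]
  rw [h1, hibp, h2, h3]
  simp only [hu, hv, hu', hM, hΛ]
  ring

/-- for continuous nonnegative `μ`, integer `k ≥ 1` and fixed `t ≥ 0`,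
the functional `λ ↦ f_k(t; λ, μ)` is concave on the set of continuous nonnegative functions. -/
theorem stmt3 (mu : ℝ → ℝ) (hmuc : Continuous mu) (hmu : ∀ x, 0 ≤ mu x)
    (k : ℕ) (hk : 1 ≤ k) (t : ℝ) (ht : 0 ≤ t)
    (lam1 lam2 : ℝ → ℝ) (hc1 : Continuous lam1) (hc2 : Continuous lam2)
    (h1 : ∀ x, 0 ≤ lam1 x) (h2 : ∀ x, 0 ≤ lam2 x)
    (α : ℝ) (hα : α ∈ Set.Ioo (0:ℝ) 1) :
    fk k (fun x => α * lam1 x + (1 - α) * lam2 x) mu t ≥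
      α * fk k lam1 mu t + (1 - α) * fk k lam2 mu t := by
  obtain ⟨hα0, hα1⟩ := hα
  set L : ℝ → ℝ := fun x => α * lam1 x + (1 - α) * lam2 x with hL
  have hLc : Continuous L := ((continuous_const.mul hc1).add (continuous_const.mul hc2))
  -- linearity of the interval integral
  have hlin : ∀ τ : ℝ, (∫ x in τ..t, L x)
      = α * (∫ x in τ..t, lam1 x) + (1-α) * (∫ x in τ..t, lam2 x) := by
    intro τ
    rw [hL]
    rw [intervalIntegral.integral_add (f := fun x => α * lam1 x) (g := fun x => (1 - α) * lam2 x)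
      ((continuous_const.mul hc1).intervalIntegrable τ t)
      ((continuous_const.mul hc2).intervalIntegrable τ t),
      intervalIntegral.integral_const_mul, intervalIntegral.integral_const_mul]
  -- convexity of exp
  have hexp : ∀ a b : ℝ, Real.exp (-(α * a + (1-α) * b))
      ≤ α * Real.exp (-a) + (1-α) * Real.exp (-b) := by
    intro a b
    have h := convexOn_exp.2 (mem_univ (-a)) (mem_univ (-b)) hα0.le
      (sub_nonneg.2 hα1.le) (by ring)
    rw [show -(α * a + (1-α) * b) = α • (-a) + (1-α) • (-b) by simp [smul_eq_mul]; ring]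
    simpa [smul_eq_mul] using h
  -- abbreviations
  set c : ℝ := 1 / (Nat.factorial (k - 1) : ℝ) with hcdef
  have hc : 0 ≤ c := by positivity
  set G0 : ℝ := uGamma k 0 with hG0
  set gT : ℝ := uGamma k (∫ x in (0:ℝ)..t, mu x) with hgT
  have hgTn : 0 ≤ gT :=
    uGamma_nonneg k (intervalIntegral.integral_nonneg ht (fun x _ => hmu x))
  set w : ℝ → ℝ := fun τ => mu τ * ((∫ x in τ..t, mu x) ^ (k-1)
      * Real.exp (-(∫ x in τ..t, mu x))) with hw
  have hMc : Continuous (fun τ => ∫ x in τ..t, mu x) :=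
    continuous_iff_continuousAt.2 fun τ => (Mderiv hmuc t τ).continuousAt
  have hwc : Continuous w := hmuc.mul ((hMc.pow _).mul (hMc.neg.rexp))
  have hwn : ∀ τ ∈ Icc (0:ℝ) t, 0 ≤ w τ := by
    intro τ hτ
    have hMn : 0 ≤ ∫ x in τ..t, mu x :=
      intervalIntegral.integral_nonneg hτ.2 (fun x _ => hmu x)
    exact mul_nonneg (hmu τ) (mul_nonneg (pow_nonneg hMn _) (Real.exp_pos _).le)
  have hEc : ∀ f : ℝ → ℝ, Continuous f →
      Continuous (fun τ => Real.exp (-∫ x in τ..t, f x)) := by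
    intro f hf
    exact ((continuous_iff_continuousAt.2 fun τ => (Mderiv hf t τ).continuousAt).neg).rexp
  set eL : ℝ := Real.exp (-∫ x in (0:ℝ)..t, L x) with heL
  set e1 : ℝ := Real.exp (-∫ x in (0:ℝ)..t, lam1 x) with he1
  set e2 : ℝ := Real.exp (-∫ x in (0:ℝ)..t, lam2 x) with he2
  have hEL : eL ≤ α * e1 + (1-α) * e2 := by
    rw [heL, hlin 0]; exact hexp _ _
  set IL : ℝ := ∫ τ in (0:ℝ)..t, w τ * Real.exp (-∫ x in τ..t, L x) with hIL
  set I1 : ℝ := ∫ τ in (0:ℝ)..t, w τ * Real.exp (-∫ x in τ..t, lam1 x) with hI1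
  set I2 : ℝ := ∫ τ in (0:ℝ)..t, w τ * Real.exp (-∫ x in τ..t, lam2 x) with hI2
  have hImono : IL ≤ α * I1 + (1-α) * I2 := by
    have hrhs : α * I1 + (1-α) * I2 = ∫ τ in (0:ℝ)..t,
        (α * (w τ * Real.exp (-∫ x in τ..t, lam1 x))
          + (1-α) * (w τ * Real.exp (-∫ x in τ..t, lam2 x))) := by
      rw [hI1, hI2, intervalIntegral.integral_add
        (f := fun τ => α * (w τ * Real.exp (-∫ x in τ..t, lam1 x)))
        (g := fun τ => (1-α) * (w τ * Real.exp (-∫ x in τ..t, lam2 x)))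
        ((continuous_const.mul (hwc.mul (hEc _ hc1))).intervalIntegrable 0 t)
        ((continuous_const.mul (hwc.mul (hEc _ hc2))).intervalIntegrable 0 t),
        intervalIntegral.integral_const_mul, intervalIntegral.integral_const_mul]
    rw [hrhs, hIL]
    apply intervalIntegral.integral_mono_on (f := fun τ => w τ * Real.exp (-∫ x in τ..t, L x))
      (g := fun τ => α * (w τ * Real.exp (-∫ x in τ..t, lam1 x))
        + (1-α) * (w τ * Real.exp (-∫ x in τ..t, lam2 x))) ht
      ((hwc.mul (hEc _ hLc)).intervalIntegrable 0 t)
      (((continuous_const.mul (hwc.mul (hEc _ hc1))).add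
        (continuous_const.mul (hwc.mul (hEc _ hc2)))).intervalIntegrable 0 t)
    intro τ hτ
    have hwτ := hwn τ hτ
    have : Real.exp (-∫ x in τ..t, L x)
        ≤ α * Real.exp (-∫ x in τ..t, lam1 x) + (1-α) * Real.exp (-∫ x in τ..t, lam2 x) := by
      rw [hlin τ]; exact hexp _ _
    nlinarith [this, hwτ]
  -- rewrite fk via the key identity
  have kL := key k t mu L hmuc hLc
  have k1 := key k t mu lam1 hmuc hc1
  have k2 := key k t mu lam2 hmuc hc2
  have fkL : fk k L mu t = c * (G0 - gT * eL - IL) := by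
    rw [fk, kL]
  have fk1 : fk k lam1 mu t = c * (G0 - gT * e1 - I1) := by
    rw [fk, k1]
  have fk2 : fk k lam2 mu t = c * (G0 - gT * e2 - I2) := by
    rw [fk, k2]
  rw [show fk k (fun x => α * lam1 x + (1 - α) * lam2 x) mu t = fk k L mu t from rfl, fkL, fk1, fk2]
  have hfinal : α * (c * (G0 - gT * e1 - I1)) + (1-α) * (c * (G0 - gT * e2 - I2))
      = c * (G0 - (α * (gT * e1) + (1-α) * (gT * e2)) - (α * I1 + (1-α) * I2)) := by ring
  rw [ge_iff_le, hfinal]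
  apply mul_le_mul_of_nonneg_left _ hc
  nlinarith [mul_le_mul_of_nonneg_left hEL hgTn, hImono]
end

section
/- Let b ≥ 0 and c ≥ 0 be constants with b + c > 0, let k ≥ 1 be an integer, and let h_1, …, h_k be real numbers. Define β_j = 1 - (b/(b+c))^j for j ≥ 1 and α_{i,j} = (b^i / i!) · (h_{j-i} - β_{j-i}) for 0 ≤ i ≤ j-1. Let f_1, …, f_k : [0, ∞) → ℝ satisfy the system of differential equations f_1'(t) + (b+c)·f_1(t) = c and f_j'(t) + (b+c)·f_j(t) = c + b·f_{j-1}(t) for 2 ≤ j ≤ k, with initial conditions f_j(0) = h_j. Then f_k(t) = e^{-(b+c)·t} · (α_{k-1,k}·t^{k-1} + α_{k-2,k}·t^{k-2} + … + α_{0,k}) + β_k for all t ≥ 0. -/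
open Real Filter Topology

lemma constOnIci {F : ℝ → ℝ} (hF : ∀ t : ℝ, 0 ≤ t → HasDerivAt F 0 t) :
    ∀ t : ℝ, 0 ≤ t → F t = F 0 := by
  intro t ht
  exact constant_of_has_deriv_right_zero
    (fun x hx => (hF x hx.1).continuousAt.continuousWithinAt)
    (fun x hx => (hF x hx.1).hasDerivWithinAt) t ⟨ht, le_rfl⟩

/-- explicit solution of the system of linear ODEs
`f_1' + (b+c) f_1 = c`, `f_j' + (b+c) f_j = c + b f_{j-1}` (`2 ≤ j ≤ k`) with
initial conditions `f_j(0) = h_j`: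
`f_k(t) = e^{-(b+c)t} (α_{k-1,k} t^{k-1} + … + α_{0,k}) + β_k`, where
`β_j = 1 - (b/(b+c))^j` and `α_{i,j} = (b^i / i!)(h_{j-i} - β_{j-i})`. -/
theorem stmt13 (b c : ℝ) (hb : 0 ≤ b) (hc : 0 ≤ c) (hbc : 0 < b + c)
    (k : ℕ) (hk : 1 ≤ k) (h : ℕ → ℝ) (f : ℕ → ℝ → ℝ)
    (β : ℕ → ℝ) (hβ : ∀ j, β j = 1 - (b / (b + c)) ^ j)
    (α : ℕ → ℕ → ℝ)
    (hα : ∀ i j, α i j = b ^ i / (Nat.factorial i : ℝ) * (h (j - i) - β (j - i)))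
    (hinit : ∀ j, 1 ≤ j → j ≤ k → f j 0 = h j)
    (hode1 : ∀ t : ℝ, 0 ≤ t → HasDerivAt (f 1) (c - (b + c) * f 1 t) t)
    (hodej : ∀ j, 2 ≤ j → j ≤ k → ∀ t : ℝ, 0 ≤ t →
      HasDerivAt (f j) (c + b * f (j - 1) t - (b + c) * f j t) t) :
    ∀ t : ℝ, 0 ≤ t →
      f k t = Real.exp (-(b + c) * t) * (∑ i ∈ Finset.range k, α i k * t ^ i) + β k := by
  have hbc' : b + c ≠ 0 := hbc.ne'
  -- β recurrence
  have hr : ∀ j : ℕ, (b + c) * β (j + 1) - c = b * β j := by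
    intro j
    rw [hβ, hβ, pow_succ']
    field_simp
    ring
  -- α recurrence
  have hαrec : ∀ i j : ℕ, α (i + 1) (j + 1) * (i + 1 : ℝ) = b * α i j := by
    intro i j
    rw [hα, hα]
    have hij : j + 1 - (i + 1) = j - i := by omega
    rw [hij, pow_succ, Nat.factorial_succ]
    have hfac : (Nat.factorial i : ℝ) ≠ 0 := Nat.cast_ne_zero.2 (Nat.factorial_pos i).ne'
    push_cast
    field_simp
  -- exp inverse
  have hE : ∀ t : ℝ, Real.exp (-(b + c) * t) * Real.exp ((b + c) * t) = 1 := by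
    intro t
    rw [← Real.exp_add, show -(b + c) * t + (b + c) * t = 0 by ring, Real.exp_zero]
  -- exp derivative
  have hEd : ∀ t : ℝ, HasDerivAt (fun s => Real.exp ((b + c) * s))
      (Real.exp ((b + c) * t) * (b + c)) t := by
    intro t
    have h1 : HasDerivAt (fun s : ℝ => (b + c) * s) (b + c) t := by
      simpa using (hasDerivAt_id t).const_mul (b + c)
    exact h1.exp
  have main : ∀ j, 1 ≤ j → j ≤ k → ∀ t : ℝ, 0 ≤ t →
      f j t = Real.exp (-(b + c) * t) * (∑ i ∈ Finset.range j, α i j * t ^ i) + β j := by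
    intro j
    induction j with
    | zero => intro h1; omega
    | succ j ih =>
      intro _ hjk t ht
      rcases Nat.eq_zero_or_pos j with rfl | hj
      · -- base case j+1 = 1
        set F : ℝ → ℝ := fun s => (f 1 s - β 1) * Real.exp ((b + c) * s) with hF
        have hβ1 : (b + c) * β 1 = c := by
          have h0 : β 0 = 0 := by rw [hβ]; simp
          have := hr 0
          rw [h0] at this
          linarith
        have hFd : ∀ s : ℝ, 0 ≤ s → HasDerivAt F 0 s := by
          intro s hs
          have := ((hode1 s hs).sub_const (β 1)).mul (hEd s)
          refine this.congr_deriv (Eq.symm ?_)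
          linear_combination (Real.exp ((b + c) * s)) * hβ1
        have hconst := constOnIci hFd t ht
        have hF0 : F 0 = h 1 - β 1 := by
          show (f 1 0 - β 1) * Real.exp ((b + c) * 0) = h 1 - β 1
          rw [hinit 1 le_rfl hk]
          simp
        rw [hF0] at hconst
        have hα01 : α 0 1 = h 1 - β 1 := by
          rw [hα]; simp
        have hEt := hE t
        simp only [zero_add, Finset.sum_range_one, pow_zero, mul_one, hα01]
        have this1 : (f 1 t - β 1) * Real.exp ((b + c) * t) = h 1 - β 1 := hconst
        linear_combination Real.exp (-(b + c) * t) * this1 - (f 1 t - β 1) * hEt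
      · -- inductive step: j ≥ 1, proving for j+1
        have hj2 : 2 ≤ j + 1 := by omega
        have hjk' : j ≤ k := by omega
        set P : ℝ → ℝ := fun s => ∑ i ∈ Finset.range (j + 1), α i (j + 1) * s ^ i with hP
        set F : ℝ → ℝ := fun s =>
          (f (j + 1) s - β (j + 1)) * Real.exp ((b + c) * s) - P s with hF
        have hPd : ∀ s : ℝ, HasDerivAt P
            (∑ i ∈ Finset.range (j + 1), α i (j + 1) * ((i : ℝ) * s ^ (i - 1))) s := by
          intro s
          exact HasDerivAt.fun_sum fun i _ => (hasDerivAt_pow i s).const_mul _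
        have hPd' : ∀ s : ℝ,
            (∑ i ∈ Finset.range (j + 1), α i (j + 1) * ((i : ℝ) * s ^ (i - 1)))
            = b * ∑ i ∈ Finset.range j, α i j * s ^ i := by
          intro s
          rw [Finset.sum_range_succ']
          simp only [Nat.cast_zero, zero_mul, mul_zero, add_zero]
          rw [Finset.mul_sum]
          refine Finset.sum_congr rfl fun i _ => ?_
          have := hαrec i j
          push_cast
          linear_combination s ^ i * this
        have hFd : ∀ s : ℝ, 0 ≤ s → HasDerivAt F 0 s := by
          intro s hs
          have hode := hodej (j + 1) hj2 hjk s hs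
          simp only [Nat.add_sub_cancel] at hode
          have hd1 := ((hode.sub_const (β (j + 1))).mul (hEd s)).sub (hPd s)
          rw [hPd' s] at hd1
          refine hd1.congr_deriv (Eq.symm ?_)
          have hfj := ih hj hjk' s hs
          have hEs := hE s
          have hrj := hr j
          set Q := ∑ i ∈ Finset.range j, α i j * s ^ i
          set E := Real.exp ((b + c) * s)
          set E' := Real.exp (-(b + c) * s)
          -- goal: 0 = (c + b * f j s - (b+c) * f (j+1) s) * E + (f (j+1) s - β (j+1)) * (E * (b+c)) - b * Q
          rw [hfj]
          linear_combination E * hrj - b * Q * hEs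
        have hconst := constOnIci hFd t ht
        have hP0 : P 0 = h (j + 1) - β (j + 1) := by
          rw [hP]
          simp only
          rw [Finset.sum_range_succ']
          simp [hα]
        have hF0 : F 0 = 0 := by
          simp [hF, hP0, hinit (j + 1) (by omega) hjk]
        rw [hF0] at hconst
        have hEt := hE t
        have this1 : (f (j + 1) t - β (j + 1)) * Real.exp ((b + c) * t)
            - (∑ i ∈ Finset.range (j + 1), α i (j + 1) * t ^ i) = 0 := hconst
        linear_combination Real.exp (-(b + c) * t) * this1
          - (f (j + 1) t - β (j + 1)) * hEt
  exact main k hk le_rfl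
end

section
/- Let μ : ℝ → ℝ be a continuous nonnegative function, let k ≥ 1 be an integer, and fix t ≥ 0. Then the functional λ ↦ f_k(t; λ, μ) is continuous with respect to the supremum norm on the set of continuous nonnegative functions on [0, t]: for every continuous nonnegative λ and every ε > 0 there exists δ > 0 such that |f_k(t; λ, μ) - f_k(t; λ', μ)| < ε for every continuous nonnegative λ' with sup_{x ∈ [0,t]} |λ(x) - λ'(x)| < δ. -/
open MeasureTheory Real Set Filter Topology intervalIntegral

lemma uGamma_integrand_integrableOn (k : ℕ) (a : ℝ) :
    IntegrableOn (fun s : ℝ => s ^ (k - 1) * Real.exp (-s)) (Set.Ioi a) := by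
  apply integrable_of_isBigO_exp_neg (b := 1/2) (by norm_num)
    ((continuous_pow _).mul (Real.continuous_exp.comp continuous_neg)).continuousOn
  have h1 : (fun x : ℝ => x ^ (k-1)) =o[atTop] fun x => Real.exp ((1/2) * x) :=
    isLittleO_pow_exp_pos_mul_atTop _ (by norm_num)
  have h2 := h1.isBigO.mul (Asymptotics.isBigO_refl (fun x : ℝ => Real.exp (-x)) atTop)
  refine h2.trans (Asymptotics.isBigO_of_le _ fun x => ?_)
  rw [← Real.exp_add]
  ring_nf
  exact le_rfl

lemma uGamma_eq_sub (k : ℕ) (x : ℝ) :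
    uGamma k x = uGamma k 0 - ∫ s in (0:ℝ)..x, s ^ (k - 1) * Real.exp (-s) := by
  set h : ℝ → ℝ := fun s => s ^ (k - 1) * Real.exp (-s) with hh
  have key : ∀ a b : ℝ, a ≤ b →
      (∫ s in Set.Ioi a, h s) = (∫ s in a..b, h s) + ∫ s in Set.Ioi b, h s := by
    intro a b hab
    rw [intervalIntegral.integral_of_le hab]
    rw [← MeasureTheory.setIntegral_union (Set.Ioc_disjoint_Ioi le_rfl) measurableSet_Ioi
      ((uGamma_integrand_integrableOn k a).mono_set Set.Ioc_subset_Ioi_self)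
      (uGamma_integrand_integrableOn k b)]
    rw [Set.Ioc_union_Ioi_eq_Ioi hab]
  rcases le_total 0 x with hx | hx
  · have := key 0 x hx
    simp only [uGamma, ← hh]
    linarith [this]
  · have := key x 0 hx
    simp only [uGamma, ← hh]
    rw [intervalIntegral.integral_symm]
    linarith [this]

lemma uGamma_continuous (k : ℕ) : Continuous (uGamma k) := by
  have : uGamma k = fun x =>
      uGamma k 0 - ∫ s in (0:ℝ)..x, s ^ (k - 1) * Real.exp (-s) :=
    funext (uGamma_eq_sub k)
  rw [this]
  exact continuous_const.sub (intervalIntegral.continuous_primitive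
    (fun a b => (((continuous_pow _).mul
      (Real.continuous_exp.comp continuous_neg)).intervalIntegrable a b)) 0)

lemma uGamma_le (k : ℕ) {x : ℝ} (hx : 0 ≤ x) : uGamma k x ≤ uGamma k 0 := by
  rw [uGamma_eq_sub k x]
  have : 0 ≤ ∫ s in (0:ℝ)..x, s ^ (k - 1) * Real.exp (-s) := by
    apply intervalIntegral.integral_nonneg hx
    intro s hs
    have : 0 ≤ s := hs.1
    positivity
  linarith

lemma exp_neg_lipschitz {a b : ℝ} (ha : 0 ≤ a) (hb : 0 ≤ b) :
    |Real.exp (-a) - Real.exp (-b)| ≤ |a - b| := by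
  have key : ∀ u v : ℝ, 0 ≤ u → 0 ≤ v → u ≤ v →
      Real.exp (-u) - Real.exp (-v) ≤ v - u := by
    intro u v hu hv huv
    have h1 : Real.exp (-u) * Real.exp (u - v) = Real.exp (-v) := by
      rw [← Real.exp_add]; ring_nf
    have h2 : (u - v) + 1 ≤ Real.exp (u - v) := Real.add_one_le_exp _
    have h3 : Real.exp (-u) ≤ 1 := Real.exp_le_one_iff.mpr (by linarith)
    have h4 : 0 < Real.exp (-u) := Real.exp_pos _
    nlinarith
  rcases le_total a b with h | h
  · have h1 := key a b ha hb h
    have h2 : Real.exp (-b) ≤ Real.exp (-a) := Real.exp_le_exp.mpr (by linarith)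
    rw [abs_of_nonneg (by linarith), abs_of_nonpos (by linarith)]
    linarith
  · have h1 := key b a hb ha h
    have h2 : Real.exp (-a) ≤ Real.exp (-b) := Real.exp_le_exp.mpr (by linarith)
    rw [abs_of_nonpos (by linarith), abs_of_nonneg (by linarith)]
    linarith

lemma continuous_int_to (t : ℝ) {f : ℝ → ℝ} (hf : Continuous f) :
    Continuous fun τ => ∫ x in τ..t, f x := by
  have : (fun τ => ∫ x in τ..t, f x) = fun τ => -(∫ x in t..τ, f x) := by
    funext τ; rw [intervalIntegral.integral_symm]
  rw [this]
  exact (intervalIntegral.continuous_primitive (fun a b => hf.intervalIntegrable a b) t).neg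

set_option maxHeartbeats 2000000 in
/-- the functional `λ ↦ f_k(t; λ, μ)` is continuous with respect to the
supremum norm on the set of continuous nonnegative functions on `[0, t]`. -/
theorem stmt16 (mu : ℝ → ℝ) (hmuc : Continuous mu) (hmu0 : ∀ x, 0 ≤ mu x)
    (k : ℕ) (hk : 1 ≤ k) (t : ℝ) (ht : 0 ≤ t)
    (lam : ℝ → ℝ) (hlamc : Continuous lam) (hlam0 : ∀ x, 0 ≤ lam x)
    (ε : ℝ) (hε : 0 < ε) :
    ∃ δ > 0, ∀ lam' : ℝ → ℝ, Continuous lam' → (∀ x, 0 ≤ lam' x) →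
      sSup ((fun x => |lam x - lam' x|) '' Set.Icc 0 t) < δ →
      |fk k lam mu t - fk k lam' mu t| < ε := by
  set C : ℝ := 1 / (Nat.factorial (k - 1) : ℝ) with hC
  have hCpos : 0 < C := by positivity
  set G0 : ℝ := uGamma k 0 with hG0
  have hG0nn : 0 ≤ G0 := uGamma_nonneg k le_rfl
  set L : ℝ := sSup (lam '' Set.Icc 0 t) with hL
  have hIcc_ne : (Set.Icc (0:ℝ) t).Nonempty := ⟨0, le_rfl, ht⟩
  have hLle : ∀ x ∈ Set.Icc (0:ℝ) t, lam x ≤ L := fun x hx =>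
    le_csSup ((isCompact_Icc.image hlamc).bddAbove) (Set.mem_image_of_mem lam hx)
  have hLnn : 0 ≤ L := le_trans (hlam0 0) (hLle 0 ⟨le_rfl, ht⟩)
  set K : ℝ := C * G0 * (1 + (L + 1) * t) * t with hK
  have h1Lt : (0:ℝ) ≤ 1 + (L + 1) * t := by
    have : (0:ℝ) ≤ (L + 1) * t := mul_nonneg (by linarith) ht
    linarith
  have hKnn : 0 ≤ K := mul_nonneg (mul_nonneg (mul_nonneg hCpos.le hG0nn) h1Lt) ht
  refine ⟨min 1 (ε / (K + 1)), lt_min one_pos (div_pos hε (by linarith)), ?_⟩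
  intro lam' hlam'c hlam'0 hsup
  set δ : ℝ := min 1 (ε / (K + 1)) with hδ
  have hδ1 : δ ≤ 1 := min_le_left _ _
  have hδ2 : δ ≤ ε / (K + 1) := min_le_right _ _
  have hδ0 : 0 < δ := lt_min one_pos (div_pos hε (by linarith))
  clear_value δ
  have hpt : ∀ x ∈ Set.Icc (0:ℝ) t, |lam x - lam' x| < δ := by
    intro x hx
    refine lt_of_le_of_lt (le_csSup ?_ (Set.mem_image_of_mem (fun x => |lam x - lam' x|) hx)) hsup
    exact (isCompact_Icc.image (by continuity)).bddAbove
  -- the integrands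
  set g : ℝ → ℝ := fun τ =>
    lam τ * Real.exp (-∫ x in τ..t, lam x) * uGamma k (∫ x in τ..t, mu x) with hg
  set g' : ℝ → ℝ := fun τ =>
    lam' τ * Real.exp (-∫ x in τ..t, lam' x) * uGamma k (∫ x in τ..t, mu x) with hg'
  have hgc : Continuous g := by
    exact (hlamc.mul (Real.continuous_exp.comp
      (continuous_int_to t hlamc).neg)).mul
      ((uGamma_continuous k).comp (continuous_int_to t hmuc))
  have hg'c : Continuous g' := by
    exact (hlam'c.mul (Real.continuous_exp.comp
      (continuous_int_to t hlam'c).neg)).mul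
      ((uGamma_continuous k).comp (continuous_int_to t hmuc))
  have hdiff : fk k lam mu t - fk k lam' mu t = C * ∫ τ in (0:ℝ)..t, (g τ - g' τ) := by
    rw [fk, fk, ← mul_sub,
      intervalIntegral.integral_sub (hgc.intervalIntegrable 0 t) (hg'c.intervalIntegrable 0 t)]
  set B : ℝ := G0 * (δ + (L + δ) * (δ * t)) with hB
  have hbound : ∀ τ ∈ Set.uIoc (0:ℝ) t, ‖g τ - g' τ‖ ≤ B := by
    intro τ hτ
    rw [Set.uIoc_of_le ht] at hτ
    have hτm : τ ∈ Set.Icc (0:ℝ) t := ⟨hτ.1.le, hτ.2⟩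
    have hτt : τ ≤ t := hτ.2
    have hτ0 : 0 ≤ τ := hτ.1.le
    have hΛ : 0 ≤ ∫ x in τ..t, lam x :=
      intervalIntegral.integral_nonneg hτt fun x _ => hlam0 x
    have hΛ' : 0 ≤ ∫ x in τ..t, lam' x :=
      intervalIntegral.integral_nonneg hτt fun x _ => hlam'0 x
    have hM : 0 ≤ ∫ x in τ..t, mu x :=
      intervalIntegral.integral_nonneg hτt fun x _ => hmu0 x
    set E1 := Real.exp (-∫ x in τ..t, lam x) with hE1
    set E2 := Real.exp (-∫ x in τ..t, lam' x) with hE2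
    have hE1le : E1 ≤ 1 := Real.exp_le_one_iff.mpr (by linarith)
    have hE1nn : 0 ≤ E1 := (Real.exp_pos _).le
    have hGnn : 0 ≤ uGamma k (∫ x in τ..t, mu x) := uGamma_nonneg k hM
    have hGle : uGamma k (∫ x in τ..t, mu x) ≤ G0 := uGamma_le k hM
    -- difference of inner integrals
    have hint : |(∫ x in τ..t, lam x) - ∫ x in τ..t, lam' x| ≤ δ * t := by
      rw [← intervalIntegral.integral_sub (hlamc.intervalIntegrable τ t)
        (hlam'c.intervalIntegrable τ t)]
      have := intervalIntegral.norm_integral_le_of_norm_le_const (C := δ)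
        (f := fun x => lam x - lam' x) (a := τ) (b := t) ?_
      · rw [Real.norm_eq_abs] at this
        refine this.trans ?_
        rw [abs_of_nonneg (by linarith)]
        nlinarith [mul_nonneg hδ0.le hτ0]
      · intro x hx
        rw [Set.uIoc_of_le hτt] at hx
        exact (hpt x ⟨le_trans hτ0 hx.1.le, hx.2⟩).le
    have hEdiff : |E1 - E2| ≤ δ * t := (exp_neg_lipschitz hΛ hΛ').trans hint
    have hlamd : |lam τ - lam' τ| ≤ δ := (hpt τ hτm).le
    have hlam'le : lam' τ ≤ L + δ := by
      have := abs_le.mp hlamd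
      have := hLle τ hτm
      linarith
    have key : |lam τ * E1 - lam' τ * E2| ≤ δ + (L + δ) * (δ * t) := by
      have heq : lam τ * E1 - lam' τ * E2
          = (lam τ - lam' τ) * E1 + lam' τ * (E1 - E2) := by ring
      rw [heq]
      refine (abs_add_le _ _).trans ?_
      rw [abs_mul, abs_mul]
      have h1 : |lam τ - lam' τ| * |E1| ≤ δ := by
        rw [abs_of_nonneg hE1nn]
        nlinarith [abs_nonneg (lam τ - lam' τ)]
      have h2 : |lam' τ| * |E1 - E2| ≤ (L + δ) * (δ * t) := by
        rw [abs_of_nonneg (hlam'0 τ)]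
        have h3 : 0 ≤ lam' τ := hlam'0 τ
        nlinarith [abs_nonneg (E1 - E2)]
      linarith
    have hgτ : g τ = lam τ * E1 * uGamma k (∫ x in τ..t, mu x) := by
      simp only [hg, hE1]
    have hg'τ : g' τ = lam' τ * E2 * uGamma k (∫ x in τ..t, mu x) := by
      simp only [hg', hE2]
    have hkeynn : 0 ≤ δ + (L + δ) * (δ * t) :=
      add_nonneg hδ0.le (mul_nonneg (add_nonneg hLnn hδ0.le) (mul_nonneg hδ0.le ht))
    rw [Real.norm_eq_abs, hgτ, hg'τ,
      show lam τ * E1 * uGamma k (∫ x in τ..t, mu x)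
          - lam' τ * E2 * uGamma k (∫ x in τ..t, mu x)
          = (lam τ * E1 - lam' τ * E2) * uGamma k (∫ x in τ..t, mu x) by ring,
      abs_mul, abs_of_nonneg hGnn]
    calc |lam τ * E1 - lam' τ * E2| * uGamma k (∫ x in τ..t, mu x)
        ≤ (δ + (L + δ) * (δ * t)) * G0 := mul_le_mul key hGle hGnn hkeynn
      _ = B := by rw [hB]; ring
  have hmain : |fk k lam mu t - fk k lam' mu t| ≤ C * (B * t) := by
    rw [hdiff, abs_mul, abs_of_pos hCpos]
    have := intervalIntegral.norm_integral_le_of_norm_le_const hbound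
    rw [Real.norm_eq_abs] at this
    refine mul_le_mul_of_nonneg_left (this.trans ?_) hCpos.le
    rw [abs_of_nonneg (by linarith : (0:ℝ) ≤ t - 0), show t - 0 = t by ring]
  refine lt_of_le_of_lt hmain ?_
  have hstep : C * (B * t) ≤ K * δ := by
    have h1 : (L + δ) * t ≤ (L + 1) * t := mul_le_mul_of_nonneg_right (by linarith) ht
    have hc : 0 ≤ C * G0 * t * δ :=
      mul_nonneg (mul_nonneg (mul_nonneg hCpos.le hG0nn) ht) hδ0.le
    calc C * (B * t) = C * G0 * t * δ * (1 + (L + δ) * t) := by rw [hB]; ring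
      _ ≤ C * G0 * t * δ * (1 + (L + 1) * t) :=
          mul_le_mul_of_nonneg_left (by linarith) hc
      _ = K * δ := by rw [hK]; ring
  refine lt_of_le_of_lt hstep ?_
  have hK1 : (0:ℝ) < K + 1 := by linarith
  have : K * δ ≤ K * (ε / (K + 1)) := mul_le_mul_of_nonneg_left hδ2 hKnn
  refine lt_of_le_of_lt this ?_
  rw [div_eq_inv_mul, ← mul_assoc, mul_comm]
  have hx : K * (K + 1)⁻¹ < 1 := by
    rw [← div_eq_mul_inv]
    exact (div_lt_one hK1).mpr (by linarith)
  exact mul_lt_of_lt_one_right hε hx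
end
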